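/- arXiv:1703.00443 — 4 statements merged into one kernel-verified Lean document; each statement's English description precedes it below -/
import Mathlib

section
/- Characterization of simplex projection via a threshold: for x ∈ ℝⁿ, the projection z* of x onto the simplex Δ = {z ≥ 0, Σzᵢ = 1} satisfies zᵢ* = max(xᵢ − τ, 0) for some τ ∈ ℝ with Σᵢ max(xᵢ − τ, 0) = 1. -/
theorem simplex_projection_threshold {n : ℕ} (hn : 0 < n) (x : Fin n → ℝ)
    (zstar : Fin n → ℝ)
    (hfeas : (∀ i, 0 ≤ zstar i) ∧ ∑ i, zstar i = 1)
    (hmin : ∀ w : Fin n → ℝ, (∀ i, 0 ≤ w i) → ∑ i, w i = 1 →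
      ∑ i, (zstar i - x i) ^ 2 ≤ ∑ i, (w i - x i) ^ 2) :
    ∃ τ : ℝ, (∀ i, zstar i = max (x i - τ) 0) ∧ ∑ i, max (x i - τ) 0 = 1 := by
  obtain ⟨hpos, hsum⟩ := hfeas
  -- Key: if zstar i > 0 then x j - zstar j ≤ x i - zstar i for all j
  have key : ∀ i j, 0 < zstar i → x j - zstar j ≤ x i - zstar i := by
    intro i j hi
    rcases eq_or_ne i j with rfl | hij
    · exact le_rfl
    have hstep : ∀ ε : ℝ, 0 < ε → ε ≤ zstar i →
        x j - zstar j ≤ x i - zstar i + ε := by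
      intro ε hε hεi
      set w : Fin n → ℝ := fun k =>
        zstar k + ((if k = j then ε else 0) - (if k = i then ε else 0)) with hw
      have hwnn : ∀ k, 0 ≤ w k := by
        intro k
        simp only [hw]
        rcases eq_or_ne k i with rfl | hki
        · simp [hij]
          linarith
        · rcases eq_or_ne k j with rfl | hkj
          · simp [hki]
            linarith [hpos k]
          · simp [hki, hkj]
            exact hpos k
      have hwsum : ∑ k, w k = 1 := by
        simp only [hw]
        rw [Finset.sum_add_distrib, hsum, Finset.sum_sub_distrib,
          Finset.sum_ite_eq' Finset.univ j (fun _ => ε),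
          Finset.sum_ite_eq' Finset.univ i (fun _ => ε)]
        simp
      have h := hmin w hwnn hwsum
      have hexp : ∑ k, (w k - x k) ^ 2 = ∑ k, ((zstar k - x k) ^ 2
          + ((if k = j then 2 * (zstar k - x k) * ε + ε ^ 2 else 0)
          + (if k = i then -(2 * (zstar k - x k) * ε) + ε ^ 2 else 0))) := by
        apply Finset.sum_congr rfl
        intro k _
        simp only [hw]
        rcases eq_or_ne k i with rfl | hki
        · simp [hij]; ring
        · rcases eq_or_ne k j with rfl | hkj
          · simp [hki]; ring
          · simp [hki, hkj]
      rw [hexp, Finset.sum_add_distrib, Finset.sum_add_distrib,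
        Finset.sum_ite_eq' Finset.univ j (fun k => 2 * (zstar k - x k) * ε + ε ^ 2),
        Finset.sum_ite_eq' Finset.univ i (fun k => -(2 * (zstar k - x k) * ε) + ε ^ 2)]
        at h
      simp only [Finset.mem_univ, if_true] at h
      nlinarith [h, hε]
    by_contra hc
    push_neg at hc
    set δ := min ((x j - zstar j - (x i - zstar i)) / 2) (zstar i) with hδ
    have hδpos : 0 < δ := lt_min (by linarith) hi
    have h1 := hstep δ hδpos (min_le_right _ _)
    have h2 : δ ≤ (x j - zstar j - (x i - zstar i)) / 2 := min_le_left _ _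
    linarith
  -- some coordinate is positive
  have hex : ∃ i, 0 < zstar i := by
    by_contra hc
    push_neg at hc
    have : ∑ i, zstar i = 0 :=
      Finset.sum_eq_zero fun i _ => le_antisymm (hc i) (hpos i)
    rw [hsum] at this
    norm_num at this
  obtain ⟨i0, hi0⟩ := hex
  have hmax : ∀ j, zstar j = max (x j - (x i0 - zstar i0)) 0 := by
    intro j
    rcases eq_or_lt_of_le (hpos j) with hz | hz
    · have h1 := key i0 j hi0
      rw [← hz] at h1 ⊢
      rw [max_eq_right]
      linarith
    · have h1 := key i0 j hi0
      have h2 := key j i0 hz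
      have h3 : x j - (x i0 - zstar i0) = zstar j := by linarith
      rw [h3]
      exact (max_eq_left hz.le).symm
  refine ⟨x i0 - zstar i0, hmax, ?_⟩
  rw [← hsum]
  exact (Finset.sum_congr rfl fun j _ => (hmax j).symm)
end

section
/- Any continuous piecewise linear function f : ℝ → ℝ with finitely many breakpoints can be written in sum-of-max form: there exist k ∈ ℕ, weights wᵢ ∈ ℝ, slopes aᵢ ∈ ℝ, offsets bᵢ ∈ ℝ, and a constant c such that f(x) = c + Σᵢ₌₁ᵏ wᵢ · max(aᵢ x + bᵢ, 0) for all x ∈ ℝ. -/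
theorem piecewise_linear_sum_of_max (f : ℝ → ℝ) (hf : Continuous f)
    (hpl : ∃ (N : ℕ) (t : Fin N → ℝ) (α β : Fin (N + 1) → ℝ), StrictMono t ∧
      ∀ (x : ℝ) (j : Fin (N + 1)),
        (∀ i : Fin N, ((i : ℕ) < (j : ℕ) → t i ≤ x) ∧ ((j : ℕ) ≤ (i : ℕ) → x ≤ t i)) →
        f x = α j * x + β j) :
    ∃ (k : ℕ) (w a b : Fin k → ℝ) (c : ℝ),
      ∀ x : ℝ, f x = c + ∑ i, w i * max (a i * x + b i) 0 := by
  obtain ⟨N, t, α, β, ht, h⟩ := hpl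
  -- compatibility at breakpoints
  have compat : ∀ i : Fin N,
      α i.castSucc * t i + β i.castSucc = α i.succ * t i + β i.succ := by
    intro i
    have h1 : f (t i) = α i.castSucc * t i + β i.castSucc := by
      apply h
      intro i'
      simp only [Fin.coe_castSucc]
      exact ⟨fun hi' => (ht (Fin.lt_def.mpr hi')).le,
        fun hi' => ht.monotone (Fin.le_def.mpr hi')⟩
    have h2 : f (t i) = α i.succ * t i + β i.succ := by
      apply h
      intro i'
      simp only [Fin.val_succ]
      exact ⟨fun hi' => ht.monotone (Fin.le_def.mpr (Nat.lt_succ_iff.mp hi')),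
        fun hi' => (ht (Fin.lt_def.mpr (Nat.lt_of_succ_le hi'))).le⟩
    rw [← h1, ← h2]
  -- the telescoping identity
  have main : ∀ (x : ℝ) (j : ℕ) (hj : j ≤ N),
      α 0 * x + β 0 + ∑ i : Fin N,
          (if (i : ℕ) < j then (α i.succ - α i.castSucc) * (x - t i) else 0)
        = α ⟨j, Nat.lt_succ_of_le hj⟩ * x + β ⟨j, Nat.lt_succ_of_le hj⟩ := by
    intro x j
    induction j with
    | zero =>
      intro hj
      simp only [Nat.not_lt_zero, if_false, Finset.sum_const_zero, add_zero]
      rfl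
    | succ j ih =>
      intro hj
      have hj' : j < N := hj
      have hjN : j ≤ N := le_of_lt hj'
      have split : ∀ i : Fin N,
          (if (i : ℕ) < j + 1 then (α i.succ - α i.castSucc) * (x - t i) else 0)
            = (if (i : ℕ) < j then (α i.succ - α i.castSucc) * (x - t i) else 0)
              + (if i = ⟨j, hj'⟩ then (α i.succ - α i.castSucc) * (x - t i) else 0) := by
        intro i
        have : i = ⟨j, hj'⟩ ↔ (i : ℕ) = j := by
          constructor
          · rintro rfl; rfl
          · intro hh; exact Fin.ext hh
        by_cases h1 : (i : ℕ) < j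
        · have h2 : ¬ i = ⟨j, hj'⟩ := by rw [this]; omega
          simp [h1, h2, Nat.lt_succ_of_lt h1]
        · by_cases h2 : (i : ℕ) = j
          · simp [h1, this.mpr h2, h2]
          · have h3 : ¬ (i : ℕ) < j + 1 := by omega
            simp [h1, h3, this, h2]
      rw [Finset.sum_congr rfl (fun i _ => split i), Finset.sum_add_distrib,
        Finset.sum_ite_eq' Finset.univ (⟨j, hj'⟩ : Fin N)]
      simp only [Finset.mem_univ, if_true]
      have hc := compat ⟨j, hj'⟩
      have e1 : (⟨j, hj'⟩ : Fin N).succ = ⟨j + 1, Nat.lt_succ_of_le hj⟩ := rfl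
      have e2 : (⟨j, hj'⟩ : Fin N).castSucc = ⟨j, Nat.lt_succ_of_le hjN⟩ := rfl
      rw [e1, e2] at hc ⊢
      have ihj := ih hjN
      rw [← add_assoc, ihj] at *
      nlinarith [ihj, hc]
  -- key representation
  have key : ∀ x : ℝ, f x = α 0 * x + β 0 +
      ∑ i : Fin N, (α i.succ - α i.castSucc) * max (x - t i) 0 := by
    intro x
    -- choose the interval containing x
    obtain ⟨j, hjle, hlow, hhigh⟩ : ∃ j : ℕ, j ≤ N ∧
        (∀ i : Fin N, (i : ℕ) < j → t i ≤ x) ∧ (∀ i : Fin N, j ≤ (i : ℕ) → x ≤ t i) := by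
      by_cases hS : (Finset.univ.filter (fun i : Fin N => x ≤ t i)).Nonempty
      · set i₀ := (Finset.univ.filter (fun i : Fin N => x ≤ t i)).min' hS with hi₀
        have hi₀mem : i₀ ∈ Finset.univ.filter (fun i : Fin N => x ≤ t i) :=
          Finset.min'_mem _ hS
        have hi₀x : x ≤ t i₀ := (Finset.mem_filter.mp hi₀mem).2
        refine ⟨(i₀ : ℕ), le_of_lt i₀.isLt, fun i hi => ?_, fun i hi => ?_⟩
        · by_contra hcon
          push_neg at hcon
          have : i ∈ Finset.univ.filter (fun i : Fin N => x ≤ t i) :=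
            Finset.mem_filter.mpr ⟨Finset.mem_univ _, le_of_lt hcon⟩
          have := Finset.min'_le _ _ this
          rw [← hi₀] at this
          exact absurd (lt_of_lt_of_le hi (Fin.le_def.mp this)) (lt_irrefl _)
        · exact le_trans hi₀x (ht.monotone (Fin.le_def.mpr hi))
      · refine ⟨N, le_refl N, fun i hi => ?_, fun i hi => absurd i.isLt (by omega)⟩
        by_contra hcon
        push_neg at hcon
        exact hS ⟨i, Finset.mem_filter.mpr ⟨Finset.mem_univ _, le_of_lt hcon⟩⟩
    have hfx : f x = α ⟨j, Nat.lt_succ_of_le hjle⟩ * x + β ⟨j, Nat.lt_succ_of_le hjle⟩ := by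
      apply h
      intro i
      exact ⟨hlow i, hhigh i⟩
    have hsum : ∑ i : Fin N, (α i.succ - α i.castSucc) * max (x - t i) 0
        = ∑ i : Fin N, (if (i : ℕ) < j then (α i.succ - α i.castSucc) * (x - t i) else 0) := by
      apply Finset.sum_congr rfl
      intro i _
      by_cases hij : (i : ℕ) < j
      · have := hlow i hij
        rw [if_pos hij, max_eq_left (by linarith)]
      · have := hhigh i (le_of_not_gt hij)
        rw [if_neg hij, max_eq_right (by linarith), mul_zero]
    rw [hsum, hfx]
    exact (main x j hjle).symm
  -- assemble the sum-of-max form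
  refine ⟨N + 2,
    fun i => if hi : (i : ℕ) < N then α (⟨i, hi⟩ : Fin N).succ - α (⟨i, hi⟩ : Fin N).castSucc
             else if (i : ℕ) = N then α 0 else -(α 0),
    fun i => if (i : ℕ) < N then 1 else if (i : ℕ) = N then 1 else -1,
    fun i => if hi : (i : ℕ) < N then -(t ⟨i, hi⟩) else 0,
    β 0, ?_⟩
  intro x
  rw [key x, Fin.sum_univ_castSucc, Fin.sum_univ_castSucc]
  simp only [Fin.coe_castSucc, Fin.val_last]
  have hN1 : ¬ (N + 1 < N) := by omega
  have hN2 : ¬ (N + 1 = N) := by omega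
  have hN3 : ¬ (N < N) := lt_irrefl N
  simp only [hN1, hN2, hN3, eq_self_iff_true, if_true, if_false, dite_true, dite_false]
  have hterm : ∀ i : Fin N,
      (if hi : (i : ℕ) < N then α (⟨(i : ℕ), hi⟩ : Fin N).succ - α (⟨(i : ℕ), hi⟩ : Fin N).castSucc
        else if (i : ℕ) = N then α 0 else -(α 0)) *
        max ((if (i : ℕ) < N then (1:ℝ) else if (i : ℕ) = N then 1 else -1) * x +
          (if hi : (i : ℕ) < N then -(t ⟨(i : ℕ), hi⟩) else 0)) 0
      = (α i.succ - α i.castSucc) * max (x - t i) 0 := by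
    intro i
    have hi : (i : ℕ) < N := i.isLt
    simp only [dif_pos hi, if_pos hi, one_mul, Fin.eta, ← sub_eq_add_neg]
  rw [Finset.sum_congr rfl (fun i _ => hterm i)]
  have hmax : α 0 * max (1 * x + 0) 0 + -(α 0) * max (-1 * x + 0) 0 = α 0 * x := by
    rcases le_total x 0 with hx | hx
    · rw [max_eq_right (by linarith), max_eq_left (by linarith)]; ring
    · rw [max_eq_left (by linarith), max_eq_right (by linarith)]; ring
  linarith [hmax]
end

section
/- The function f : ℝ² → ℝ, f(x) = max(a₁ᵀx, a₂ᵀx, a₃ᵀx), for a₁, a₂, a₃ ∈ ℝ² pairwise linearly independent, cannot be written exactly as f(x) = Σᵢ₌₁ᵐ wᵢ max(aᵢᵀx + bᵢ, 0) + cᵀx + d for any finite m (i.e., as a two-layer ReLU network plus affine part), because f is positively homogeneous with nondifferentiability set equal to three half-lines from the origin, while any such ReLU expression has nondifferentiability set that is a union of full lines. -/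
open Matrix

private lemma relu_dd (p q β : ℝ) (h : |β| + |q| ≤ |p|) :
    max (p + q + β) 0 + max (p - q + β) 0 - 2 * max (p + β) 0 =
    max (-p + q + β) 0 + max (-p - q + β) 0 - 2 * max (-p + β) 0 := by
  have hq1 := le_abs_self q
  have hq2 := neg_abs_le q
  have hb1 := le_abs_self β
  have hb2 := neg_abs_le β
  rcases le_or_gt 0 p with hp | hp
  · have hp' : |p| = p := abs_of_nonneg hp
    rw [max_eq_left (by linarith), max_eq_left (by linarith),
        max_eq_left (by linarith), max_eq_right (by linarith),
        max_eq_right (by linarith), max_eq_right (by linarith)]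
    ring
  · have hp' : |p| = -p := abs_of_neg hp
    rw [max_eq_right (by linarith), max_eq_right (by linarith),
        max_eq_right (by linarith), max_eq_left (by linarith),
        max_eq_left (by linarith), max_eq_left (by linarith)]
    ring

set_option maxHeartbeats 1000000 in
theorem max_of_three_not_two_layer_relu
    (a₁ a₂ a₃ : Fin 2 → ℝ)
    (hpair₁₂ : LinearIndependent ℝ ![a₁, a₂])
    (hpair₁₃ : LinearIndependent ℝ ![a₁, a₃])
    (hpair₂₃ : LinearIndependent ℝ ![a₂, a₃])
    (haff : AffineIndependent ℝ ![a₁, a₂, a₃]) :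
    ¬ ∃ (m : ℕ) (w : Fin m → ℝ) (u : Fin m → (Fin 2 → ℝ)) (bb : Fin m → ℝ)
        (c : Fin 2 → ℝ) (d : ℝ),
      ∀ x : Fin 2 → ℝ,
        max (a₁ ⬝ᵥ x) (max (a₂ ⬝ᵥ x) (a₃ ⬝ᵥ x)) =
          (∑ i, w i * max (u i ⬝ᵥ x + bb i) 0) + c ⬝ᵥ x + d := by
  rintro ⟨m, w, u, bb, c, d, h⟩
  classical
  set v : Fin 2 → ℝ := a₁ - a₂ with hv
  -- v ≠ 0
  have hvne : v ≠ 0 := by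
    intro h0
    have h12 : a₁ = a₂ := sub_eq_zero.mp h0
    have := (LinearIndependent.pair_iff.mp hpair₁₂ 1 (-1) (by
      rw [h12]; simp)).1
    norm_num at this
  -- δ > 0
  have hδ : 0 < v ⬝ᵥ v := by
    rcases lt_or_eq_of_le (Finset.sum_nonneg fun i _ => mul_self_nonneg (v i)) with h' | h'
    · exact h'
    · exact absurd (dotProduct_self_eq_zero.mp h'.symm) hvne
  clear_value v
  -- the crease direction z₀
  set z₀ : Fin 2 → ℝ := ![a₁ 1 - a₂ 1, -(a₁ 0 - a₂ 0)] with hz₀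
  have hz₀v : v ⬝ᵥ z₀ = 0 := by
    simp [hz₀, hv, dotProduct, Fin.sum_univ_two]
    ring
  have hz₀3 : (a₁ - a₃) ⬝ᵥ z₀ ≠ 0 := by
    intro hcon
    simp [hz₀, dotProduct, Fin.sum_univ_two] at hcon
    have hdet : (a₁ 0 - a₃ 0) * (a₁ 1 - a₂ 1) - (a₁ 1 - a₃ 1) * (a₁ 0 - a₂ 0) = 0 := by
      linear_combination hcon
    have haff' := affineIndependent_iff.mp haff
    have h1 : a₁ 1 - a₂ 1 = 0 := by
      have hw := haff' Finset.univ
        ![(a₁ 1 - a₂ 1) - (a₁ 1 - a₃ 1), (a₁ 1 - a₃ 1), -(a₁ 1 - a₂ 1)]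
        (by simp [Fin.sum_univ_three]; try ring)
        (by
          funext k
          fin_cases k <;>
            simp [Fin.sum_univ_three, Pi.smul_apply, smul_eq_mul] <;> nlinarith [hdet])
        2 (Finset.mem_univ _)
      simp at hw
      linarith
    have h0 : a₁ 0 - a₂ 0 = 0 := by
      have hw := haff' Finset.univ
        ![(a₁ 0 - a₂ 0) - (a₁ 0 - a₃ 0), (a₁ 0 - a₃ 0), -(a₁ 0 - a₂ 0)]
        (by simp [Fin.sum_univ_three]; try ring)
        (by
          funext k
          fin_cases k <;>
            simp [Fin.sum_univ_three, Pi.smul_apply, smul_eq_mul] <;> nlinarith [hdet])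
        2 (Finset.mem_univ _)
      simp at hw
      linarith
    apply hvne
    rw [hv]
    funext k
    fin_cases k
    · show a₁ 0 - a₂ 0 = 0; linarith
    · show a₁ 1 - a₂ 1 = 0; linarith
  -- choose orientation
  set z : Fin 2 → ℝ := if 0 < (a₁ - a₃) ⬝ᵥ z₀ then z₀ else -z₀ with hz
  have hγpos : 0 < (a₁ - a₃) ⬝ᵥ z := by
    rw [hz]
    split_ifs with hc
    · exact hc
    · rw [dotProduct_neg]
      have : (a₁ - a₃) ⬝ᵥ z₀ < 0 := lt_of_le_of_ne (not_lt.mp hc) hz₀3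
      linarith
  have hvz : v ⬝ᵥ z = 0 := by
    rw [hz]
    split_ifs
    · exact hz₀v
    · rw [dotProduct_neg, hz₀v, neg_zero]
  set γ : ℝ := (a₁ - a₃) ⬝ᵥ z with hγ
  -- scalar identities
  have e12z : a₂ ⬝ᵥ z = a₁ ⬝ᵥ z := by
    have := hvz; rw [hv, sub_dotProduct] at this; linarith
  have e13z : a₃ ⬝ᵥ z = a₁ ⬝ᵥ z - γ := by
    have := hγ; rw [sub_dotProduct] at this; linarith
  clear_value z₀ z γ
  -- big time T
  set T : ℝ := 1 + (|(a₁ - a₃) ⬝ᵥ v| + |(a₂ - a₃) ⬝ᵥ v|) / γ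
      + ∑ i, (|bb i| + |u i ⬝ᵥ v|) / |u i ⬝ᵥ z| with hT
  have hsum_nonneg : (0:ℝ) ≤ ∑ i, (|bb i| + |u i ⬝ᵥ v|) / |u i ⬝ᵥ z| :=
    Finset.sum_nonneg fun i _ => div_nonneg (by positivity) (abs_nonneg _)
  have hfrac_nonneg : (0:ℝ) ≤ (|(a₁ - a₃) ⬝ᵥ v| + |(a₂ - a₃) ⬝ᵥ v|) / γ :=
    div_nonneg (by positivity) hγpos.le
  have hT1 : (1:ℝ) ≤ T := by rw [hT]; linarith
  have hTpos : (0:ℝ) < T := by linarith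
  have hTa : |(a₁ - a₃) ⬝ᵥ v| + |(a₂ - a₃) ⬝ᵥ v| ≤ T * γ := by
    have h1 : (|(a₁ - a₃) ⬝ᵥ v| + |(a₂ - a₃) ⬝ᵥ v|) / γ ≤ T := by
      rw [hT]; linarith
    calc |(a₁ - a₃) ⬝ᵥ v| + |(a₂ - a₃) ⬝ᵥ v|
        = (|(a₁ - a₃) ⬝ᵥ v| + |(a₂ - a₃) ⬝ᵥ v|) / γ * γ := by
          rw [div_mul_cancel₀ _ hγpos.ne']
      _ ≤ T * γ := by
          apply mul_le_mul_of_nonneg_right h1 hγpos.le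
  have hTu : ∀ i, u i ⬝ᵥ z ≠ 0 → |bb i| + |u i ⬝ᵥ v| ≤ |T * (u i ⬝ᵥ z)| := by
    intro i hi
    have habs : (0:ℝ) < |u i ⬝ᵥ z| := abs_pos.mpr hi
    have h1 : (|bb i| + |u i ⬝ᵥ v|) / |u i ⬝ᵥ z| ≤ T := by
      have hle : (|bb i| + |u i ⬝ᵥ v|) / |u i ⬝ᵥ z|
          ≤ ∑ j, (|bb j| + |u j ⬝ᵥ v|) / |u j ⬝ᵥ z| :=
        Finset.single_le_sum (f := fun j => (|bb j| + |u j ⬝ᵥ v|) / |u j ⬝ᵥ z|)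
          (fun j _ => div_nonneg (by positivity) (abs_nonneg _)) (Finset.mem_univ i)
      rw [hT]; linarith
    rw [abs_mul, abs_of_pos hTpos]
    calc |bb i| + |u i ⬝ᵥ v|
        = (|bb i| + |u i ⬝ᵥ v|) / |u i ⬝ᵥ z| * |u i ⬝ᵥ z| := by
          rw [div_mul_cancel₀ _ habs.ne']
      _ ≤ T * |u i ⬝ᵥ z| := mul_le_mul_of_nonneg_right h1 habs.le
  clear_value T
  -- abbreviation for f
  set F : (Fin 2 → ℝ) → ℝ :=
    fun x => max (a₁ ⬝ᵥ x) (max (a₂ ⬝ᵥ x) (a₃ ⬝ᵥ x)) with hF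
  clear_value F
  -- dot product expansion helper
  have dotexp : ∀ (a : Fin 2 → ℝ) (s : ℝ), a ⬝ᵥ (s • z) = s * (a ⬝ᵥ z) := by
    intro a s; rw [dotProduct_smul]; simp
  -- Claim A : v ⬝ᵥ v ≤ F(Tz+v)+F(Tz-v)-2F(Tz)
  have hA : v ⬝ᵥ v ≤ F (T • z + v) + F (T • z - v) - 2 * F (T • z) := by
    have f1 : a₁ ⬝ᵥ (T • z + v) ≤ F (T • z + v) := by
      simp only [hF]; exact le_max_left _ _
    have f2 : a₂ ⬝ᵥ (T • z - v) ≤ F (T • z - v) := by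
      simp only [hF]; exact le_trans (le_max_left _ _) (le_max_right _ _)
    have f3 : F (T • z) = a₁ ⬝ᵥ (T • z) := by
      simp only [hF]
      apply max_eq_left
      apply max_le
      · rw [dotexp, dotexp, e12z]
      · rw [dotexp, dotexp, e13z]
        have := mul_nonneg hTpos.le hγpos.le
        linarith
    have e1 : a₁ ⬝ᵥ (T • z + v) = T * (a₁ ⬝ᵥ z) + a₁ ⬝ᵥ v := by
      rw [dotProduct_add, dotexp]
    have e2 : a₂ ⬝ᵥ (T • z - v) = T * (a₁ ⬝ᵥ z) - a₂ ⬝ᵥ v := by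
      rw [dotProduct_sub, dotexp, e12z]
    have e3 : a₁ ⬝ᵥ (T • z) = T * (a₁ ⬝ᵥ z) := dotexp a₁ T
    have e4 : v ⬝ᵥ v = a₁ ⬝ᵥ v - a₂ ⬝ᵥ v := by
      rw [hv, sub_dotProduct]
    linarith
  -- Claim B : F(-Tz+v)+F(-Tz-v)-2F(-Tz) = 0
  have hdom : ∀ s : ℝ, |s| ≤ 1 → F (-(T • z) + s • v) = a₃ ⬝ᵥ (-(T • z) + s • v) := by
    intro s hs
    have habs1 : (a₁ - a₃) ⬝ᵥ v ≤ |(a₁ - a₃) ⬝ᵥ v| := le_abs_self _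
    have habs1' : -|(a₁ - a₃) ⬝ᵥ v| ≤ (a₁ - a₃) ⬝ᵥ v := neg_abs_le _
    have habs2 : (a₂ - a₃) ⬝ᵥ v ≤ |(a₂ - a₃) ⬝ᵥ v| := le_abs_self _
    have habs2' : -|(a₂ - a₃) ⬝ᵥ v| ≤ (a₂ - a₃) ⬝ᵥ v := neg_abs_le _
    have hs1 : -1 ≤ s := by have := neg_abs_le s; linarith
    have hs2 : s ≤ 1 := le_trans (le_abs_self s) hs
    have habsnn1 : (0:ℝ) ≤ |(a₁ - a₃) ⬝ᵥ v| := abs_nonneg _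
    have habsnn2 : (0:ℝ) ≤ |(a₂ - a₃) ⬝ᵥ v| := abs_nonneg _
    have key1 : a₁ ⬝ᵥ (-(T • z) + s • v) ≤ a₃ ⬝ᵥ (-(T • z) + s • v) := by
      rw [dotProduct_add, dotProduct_add, dotProduct_neg, dotProduct_neg,
        dotexp, dotexp, dotProduct_smul, dotProduct_smul, smul_eq_mul, smul_eq_mul, e13z]
      have hd : a₃ ⬝ᵥ v = a₁ ⬝ᵥ v - (a₁ - a₃) ⬝ᵥ v := by
        rw [sub_dotProduct]; ring
      rw [hd]
      -- goal: -(T * a₁z) + s * a₁v ≤ -(T * (a₁z - γ)) + s * (a₁v - (a₁-a₃)v)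
      have hsle : s * ((a₁ - a₃) ⬝ᵥ v) ≤ |(a₁ - a₃) ⬝ᵥ v| := by
        rcases le_or_gt 0 ((a₁ - a₃) ⬝ᵥ v) with hx | hx
        · have h' := mul_le_mul_of_nonneg_right hs2 hx
          rw [one_mul] at h'
          exact h'.trans (le_abs_self _)
        · have h' := mul_le_mul_of_nonpos_right hs1 hx.le
          rw [neg_one_mul] at h'
          exact h'.trans (neg_le_abs _)
      linarith [hsle, hTa]
    have key2 : a₂ ⬝ᵥ (-(T • z) + s • v) ≤ a₃ ⬝ᵥ (-(T • z) + s • v) := by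
      rw [dotProduct_add, dotProduct_add, dotProduct_neg, dotProduct_neg,
        dotexp, dotexp, dotProduct_smul, dotProduct_smul, smul_eq_mul, smul_eq_mul,
        e13z, e12z]
      have hd : a₃ ⬝ᵥ v = a₂ ⬝ᵥ v - (a₂ - a₃) ⬝ᵥ v := by
        rw [sub_dotProduct]; ring
      rw [hd]
      have hsle : s * ((a₂ - a₃) ⬝ᵥ v) ≤ |(a₂ - a₃) ⬝ᵥ v| := by
        rcases le_or_gt 0 ((a₂ - a₃) ⬝ᵥ v) with hx | hx
        · have h' := mul_le_mul_of_nonneg_right hs2 hx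
          rw [one_mul] at h'
          exact h'.trans (le_abs_self _)
        · have h' := mul_le_mul_of_nonpos_right hs1 hx.le
          rw [neg_one_mul] at h'
          exact h'.trans (neg_le_abs _)
      linarith [hsle, hTa]
    simp only [hF]
    rw [max_eq_right key2, max_eq_right key1]
  have hB : F (-(T • z) + v) + F (-(T • z) - v) - 2 * F (-(T • z)) = 0 := by
    have b1 := hdom 1 (by norm_num)
    have b2 := hdom (-1) (by norm_num)
    have b3 := hdom 0 (by norm_num)
    rw [one_smul] at b1
    rw [neg_one_smul] at b2
    rw [zero_smul, add_zero] at b3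
    have e2' : -(T • z) + -v = -(T • z) - v := by
      rw [sub_eq_add_neg]
    rw [e2'] at b2
    rw [b1, b2, b3, dotProduct_add, dotProduct_sub]
    ring
  -- Claim C : the relu sums agree at antipodal points
  have hC : ∑ i, w i * max (u i ⬝ᵥ (T • z + v) + bb i) 0
        + ∑ i, w i * max (u i ⬝ᵥ (T • z - v) + bb i) 0
        - 2 * ∑ i, w i * max (u i ⬝ᵥ (T • z) + bb i) 0
      = ∑ i, w i * max (u i ⬝ᵥ (-(T • z) + v) + bb i) 0
        + ∑ i, w i * max (u i ⬝ᵥ (-(T • z) - v) + bb i) 0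
        - 2 * ∑ i, w i * max (u i ⬝ᵥ (-(T • z)) + bb i) 0 := by
    rw [Finset.mul_sum, Finset.mul_sum, ← Finset.sum_add_distrib, ← Finset.sum_add_distrib,
      ← Finset.sum_sub_distrib, ← Finset.sum_sub_distrib]
    apply Finset.sum_congr rfl
    intro i _
    have hexp1 : u i ⬝ᵥ (T • z + v) = T * (u i ⬝ᵥ z) + u i ⬝ᵥ v := by
      rw [dotProduct_add, dotexp]
    have hexp2 : u i ⬝ᵥ (T • z - v) = T * (u i ⬝ᵥ z) - u i ⬝ᵥ v := by
      rw [dotProduct_sub, dotexp]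
    have hexp3 : u i ⬝ᵥ (T • z) = T * (u i ⬝ᵥ z) := dotexp _ _
    have hexp4 : u i ⬝ᵥ (-(T • z) + v) = -(T * (u i ⬝ᵥ z)) + u i ⬝ᵥ v := by
      rw [dotProduct_add, dotProduct_neg, dotexp]
    have hexp5 : u i ⬝ᵥ (-(T • z) - v) = -(T * (u i ⬝ᵥ z)) - u i ⬝ᵥ v := by
      rw [dotProduct_sub, dotProduct_neg, dotexp]
    have hexp6 : u i ⬝ᵥ (-(T • z)) = -(T * (u i ⬝ᵥ z)) := by
      rw [dotProduct_neg, dotexp]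
    rw [hexp1, hexp2, hexp3, hexp4, hexp5, hexp6]
    rcases eq_or_ne (u i ⬝ᵥ z) 0 with hp | hp
    · rw [hp, mul_zero, neg_zero]
    · have hPQ : |bb i| + |u i ⬝ᵥ v| ≤ |T * (u i ⬝ᵥ z)| := hTu i hp
      have hdd := relu_dd (T * (u i ⬝ᵥ z)) (u i ⬝ᵥ v) (bb i) hPQ
      linear_combination (w i) * hdd
  -- instantiate the hypothesis at the six points
  have h1 : F (T • z + v) = (∑ i, w i * max (u i ⬝ᵥ (T • z + v) + bb i) 0)
      + c ⬝ᵥ (T • z + v) + d := by simp only [hF]; exact h _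
  have h2 : F (T • z - v) = (∑ i, w i * max (u i ⬝ᵥ (T • z - v) + bb i) 0)
      + c ⬝ᵥ (T • z - v) + d := by simp only [hF]; exact h _
  have h3 : F (T • z) = (∑ i, w i * max (u i ⬝ᵥ (T • z) + bb i) 0)
      + c ⬝ᵥ (T • z) + d := by simp only [hF]; exact h _
  have h4 : F (-(T • z) + v) = (∑ i, w i * max (u i ⬝ᵥ (-(T • z) + v) + bb i) 0)
      + c ⬝ᵥ (-(T • z) + v) + d := by simp only [hF]; exact h _
  have h5 : F (-(T • z) - v) = (∑ i, w i * max (u i ⬝ᵥ (-(T • z) - v) + bb i) 0)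
      + c ⬝ᵥ (-(T • z) - v) + d := by simp only [hF]; exact h _
  have h6 : F (-(T • z)) = (∑ i, w i * max (u i ⬝ᵥ (-(T • z)) + bb i) 0)
      + c ⬝ᵥ (-(T • z)) + d := by simp only [hF]; exact h _
  -- affine parts expand
  have c1 : c ⬝ᵥ (T • z + v) = T * (c ⬝ᵥ z) + c ⬝ᵥ v := by rw [dotProduct_add, dotexp]
  have c2 : c ⬝ᵥ (T • z - v) = T * (c ⬝ᵥ z) - c ⬝ᵥ v := by rw [dotProduct_sub, dotexp]
  have c3 : c ⬝ᵥ (T • z) = T * (c ⬝ᵥ z) := dotexp _ _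
  have c4 : c ⬝ᵥ (-(T • z) + v) = -(T * (c ⬝ᵥ z)) + c ⬝ᵥ v := by
    rw [dotProduct_add, dotProduct_neg, dotexp]
  have c5 : c ⬝ᵥ (-(T • z) - v) = -(T * (c ⬝ᵥ z)) - c ⬝ᵥ v := by
    rw [dotProduct_sub, dotProduct_neg, dotexp]
  have c6 : c ⬝ᵥ (-(T • z)) = -(T * (c ⬝ᵥ z)) := by rw [dotProduct_neg, dotexp]
  rw [c1] at h1; rw [c2] at h2; rw [c3] at h3; rw [c4] at h4; rw [c5] at h5; rw [c6] at h6
  linarith [hA, hB, hC, hδ, h1, h2, h3, h4, h5, h6]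
end

section
/- Continuity of the strictly convex QP solution in the linear term: let Q be symmetric positive definite and C ⊆ ℝⁿ a nonempty closed convex set. Then the map q ↦ argmin_{z ∈ C} (1/2)zᵀQz + qᵀz is continuous (indeed Lipschitz) in q. -/
open Matrix

lemma aux_foc {n : ℕ} (Q : Matrix (Fin n) (Fin n) ℝ) (hQsymm : Q.IsSymm)
    (hQpos : ∀ d : Fin n → ℝ, 0 ≤ d ⬝ᵥ Q.mulVec d)
    (C : Set (EuclideanSpace ℝ (Fin n))) (hCconv : Convex ℝ C)
    (q x y : EuclideanSpace ℝ (Fin n)) (hx : x ∈ C) (hy : y ∈ C)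
    (hmin : ∀ z ∈ C, (1 / 2) * (x ⬝ᵥ Q.mulVec x) + q ⬝ᵥ x ≤
        (1 / 2) * (z ⬝ᵥ Q.mulVec z) + q ⬝ᵥ z) :
    0 ≤ (y - x) ⬝ᵥ Q.mulVec x + q ⬝ᵥ (y - x) := by
  set x' : Fin n → ℝ := x.ofLp with hx'
  set y' : Fin n → ℝ := y.ofLp with hy'
  set d : Fin n → ℝ := y' - x' with hd
  set a : ℝ := d ⬝ᵥ Q.mulVec x' + q ⬝ᵥ d with ha
  set b : ℝ := d ⬝ᵥ Q.mulVec d with hb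
  have hbn : 0 ≤ b := hQpos d
  have key : ∀ t : ℝ, 0 < t → t ≤ 1 → 0 ≤ t * a + t^2 / 2 * b := by
    intro t ht0 ht1
    have hmem : (x + t • (y - x)) ∈ C := by
      have := hCconv hx hy (by linarith : (0:ℝ) ≤ 1 - t) ht0.le (by ring)
      convert this using 1
      module
    have hexp := hmin _ hmem
    have hsymm : x' ⬝ᵥ Q.mulVec d = d ⬝ᵥ Q.mulVec x' := by
      rw [dotProduct_mulVec, ← Matrix.mulVec_transpose, hQsymm, dotProduct_comm]
    rw [show ((x + t • (y - x)) ⬝ᵥ Q.mulVec (x + t • (y - x)).ofLp) = (x' + t • d) ⬝ᵥ Q.mulVec (x' + t • d) from rfl,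
        show (q ⬝ᵥ (x + t • (y - x)).ofLp) = q ⬝ᵥ (x' + t • d) from rfl] at hexp
    simp only [Matrix.mulVec_add, Matrix.mulVec_smul, add_dotProduct, dotProduct_add,
      smul_dotProduct, dotProduct_smul, smul_eq_mul] at hexp
    rw [hsymm] at hexp
    nlinarith [hexp]
  by_contra hcon
  push_neg at hcon
  replace hcon : a < 0 := hcon
  have hb1 : (0:ℝ) < b + 1 := by linarith
  set t : ℝ := min 1 ((-a) / (b + 1)) with htdef
  have ht0 : 0 < t := lt_min one_pos (div_pos (by linarith) hb1)
  have ht1 : t ≤ 1 := min_le_left _ _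
  have ht2 : t * (b + 1) ≤ -a := by
    have : t ≤ (-a) / (b + 1) := min_le_right _ _
    calc t * (b + 1) ≤ ((-a) / (b+1)) * (b+1) := by nlinarith
    _ = -a := by field_simp
  have := key t ht0 ht1
  nlinarith [mul_le_mul_of_nonneg_left ht2 ht0.le, sq_nonneg t]

lemma aux_dot_inner {n : ℕ} (a b : EuclideanSpace ℝ (Fin n)) :
    a ⬝ᵥ b = inner ℝ a b := by
  simp [dotProduct, PiLp.inner_apply, RCLike.inner_apply, mul_comm]

theorem qp_solution_lipschitz_in_q {n : ℕ}
    (Q : Matrix (Fin n) (Fin n) ℝ) (hQsymm : Q.IsSymm) (hQ : Q.PosDef)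
    (μ : ℝ) (hμ : 0 < μ)
    (hμev : ∀ z : EuclideanSpace ℝ (Fin n), μ * ‖z‖ ^ 2 ≤ z ⬝ᵥ Q.mulVec z)
    (C : Set (EuclideanSpace ℝ (Fin n)))
    (hCne : C.Nonempty) (hCclosed : IsClosed C) (hCconv : Convex ℝ C)
    (sol : EuclideanSpace ℝ (Fin n) → EuclideanSpace ℝ (Fin n))
    (hsol : ∀ q : EuclideanSpace ℝ (Fin n), sol q ∈ C ∧
      ∀ z ∈ C, (1 / 2) * (sol q ⬝ᵥ Q.mulVec (sol q)) + q ⬝ᵥ sol q ≤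
        (1 / 2) * (z ⬝ᵥ Q.mulVec z) + q ⬝ᵥ z) :
    Continuous sol ∧ LipschitzWith (Real.toNNReal (1 / μ)) sol := by
  have hQpos : ∀ d : Fin n → ℝ, 0 ≤ d ⬝ᵥ Q.mulVec d := fun d =>
    le_trans (by positivity) (hμev (WithLp.toLp 2 d))
  have hlip : LipschitzWith (Real.toNNReal (1 / μ)) sol := by
    apply LipschitzWith.of_dist_le_mul
    intro q1 q2
    rw [Real.coe_toNNReal _ (by positivity : (0:ℝ) ≤ 1 / μ)]
    set x := sol q1 with hxdef
    set y := sol q2 with hydef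
    have h1 := aux_foc Q hQsymm hQpos C hCconv q1 x y (hsol q1).1 (hsol q2).1 (hsol q1).2
    have h2 := aux_foc Q hQsymm hQpos C hCconv q2 y x (hsol q2).1 (hsol q1).1 (hsol q2).2
    -- combine
    set x' : Fin n → ℝ := x.ofLp with hx'
    set y' : Fin n → ℝ := y.ofLp with hy'
    set d : Fin n → ℝ := y' - x' with hd
    have h1' : 0 ≤ d ⬝ᵥ Q.mulVec x' + q1 ⬝ᵥ d := h1
    have h2' : 0 ≤ (x' - y') ⬝ᵥ Q.mulVec y' + q2 ⬝ᵥ (x' - y') := h2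
    have hneg : x' - y' = -d := by rw [hd, neg_sub]
    rw [hneg, neg_dotProduct, dotProduct_neg] at h2'
    have hdQ : d ⬝ᵥ Q.mulVec d ≤ q1 ⬝ᵥ d - q2 ⬝ᵥ d := by
      have e1 : d ⬝ᵥ Q.mulVec d = d ⬝ᵥ Q.mulVec y' - d ⬝ᵥ Q.mulVec x' := by
        rw [hd, Matrix.mulVec_sub, dotProduct_sub, ← hd]
      linarith
    have hcs : q1 ⬝ᵥ d - q2 ⬝ᵥ d ≤ ‖q1 - q2‖ * ‖(y - x : EuclideanSpace ℝ (Fin n))‖ := by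
      have e2 : ((q1 - q2 : EuclideanSpace ℝ (Fin n)) : Fin n → ℝ) ⬝ᵥ ((y - x : EuclideanSpace ℝ (Fin n)) : Fin n → ℝ) = q1 ⬝ᵥ d - q2 ⬝ᵥ d := by
        have : ((q1 - q2 : EuclideanSpace ℝ (Fin n)) : Fin n → ℝ) = (q1 : Fin n → ℝ) - (q2 : Fin n → ℝ) := rfl
        rw [show ((q1 - q2 : EuclideanSpace ℝ (Fin n)) ⬝ᵥ ((y - x : EuclideanSpace ℝ (Fin n)) : Fin n → ℝ)) = ((q1 : Fin n → ℝ) - (q2 : Fin n → ℝ)) ⬝ᵥ d from rfl, sub_dotProduct]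
      rw [← e2, aux_dot_inner (q1 - q2) (y - x)]
      exact real_inner_le_norm _ _
    have hmu := hμev (y - x)
    have hqd : ((y - x : EuclideanSpace ℝ (Fin n)) : Fin n → ℝ) ⬝ᵥ Q.mulVec ((y - x : EuclideanSpace ℝ (Fin n)) : Fin n → ℝ) = d ⬝ᵥ Q.mulVec d := rfl
    rw [hqd] at hmu
    have hnorm : μ * ‖(y - x : EuclideanSpace ℝ (Fin n))‖ ≤ ‖q1 - q2‖ := by
      rcases eq_or_lt_of_le (norm_nonneg (y - x : EuclideanSpace ℝ (Fin n))) with h0 | h0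
      · rw [← h0]; simp [norm_nonneg]
      · nlinarith
    rw [dist_eq_norm, dist_eq_norm, show sol q1 - sol q2 = x - y from rfl,
      norm_sub_rev, div_mul_eq_mul_div, one_mul, le_div_iff₀ hμ]
    linarith [mul_comm μ ‖(y - x : EuclideanSpace ℝ (Fin n))‖]
  exact ⟨hlip.continuous, hlip⟩
end
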